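/- Let X be a proper hyperbolic geodesic metric space with thin-triangles constant κ₀ and let c>0 be the universal constant such that |β_a(·,y) − β_a(·,x) + β_a(y,x)| ≤ c for all a ∈ ∂X and x,y ∈ X. Then there is a constant κ > 0 depending only on the hyperbolicity constant of X such that for every isometry g of X which fixes a point a ∈ ∂X and is not a hyperbolic isometry, one has |β_a(z,y) − β_a(z,gy)| ≤ κ for all y,z ∈ X. -/

import Mathlib

open Metric Filter Set MeasureTheory Topology Pointwise
open scoped ENNReal NNReal

noncomputable section

namespace PaperHyp

variable {X : Type*} [MetricSpace X]

/-- `f` parametrizes a geodesic segment from `x` to `y` on the interval `[0, dist x y]`. -/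
def IsGeodesicSegmentBetween (f : ℝ → X) (x y : X) : Prop :=
  f 0 = x ∧ f (dist x y) = y ∧
    ∀ s ∈ Set.Icc (0 : ℝ) (dist x y), ∀ t ∈ Set.Icc (0 : ℝ) (dist x y),
      dist (f s) (f t) = |s - t|

/-- `X` is a geodesic metric space: any two points are joined by a geodesic segment. -/
def GeodesicSpace (X : Type*) [MetricSpace X] : Prop :=
  ∀ x y : X, ∃ f : ℝ → X, IsGeodesicSegmentBetween f x y

/-- The set `s` is the image of a geodesic segment from `x` to `y`. -/
def IsGeodesicSegmentSet (s : Set X) (x y : X) : Prop :=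
  ∃ f : ℝ → X, IsGeodesicSegmentBetween f x y ∧ s = f '' Set.Icc 0 (dist x y)

/-- The `δ`-thin triangle condition: each side of a geodesic triangle is contained in the
`δ`-neighborhood of the union of the other two sides. -/
def DeltaThinTriangles (X : Type*) [MetricSpace X] (δ : ℝ) : Prop :=
  ∀ x y z : X, ∀ a b c : Set X,
    IsGeodesicSegmentSet a x y → IsGeodesicSegmentSet b y z → IsGeodesicSegmentSet c x z →
      ∀ p ∈ c, ∃ q ∈ a ∪ b, dist p q ≤ δ

/-- Gromov hyperbolicity: the `δ`-thin triangle condition for some `δ > 0`. -/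
def GromovHyperbolic (X : Type*) [MetricSpace X] : Prop :=
  ∃ δ > 0, DeltaThinTriangles X δ

/-- The Gromov product `(y,z)_x`. -/
def gromovProd (x y z : X) : ℝ := (dist y x + dist z x - dist y z) / 2

/-- A sequence converging to infinity in the sense of Gromov. -/
def IsGromovSeq (x : X) (u : ℕ → X) : Prop :=
  Tendsto (fun p : ℕ × ℕ => gromovProd x (u p.1) (u p.2)) atTop atTop

/-- The space of Gromov sequences. -/
def GromovSeq (X : Type*) [MetricSpace X] : Type _ :=
  {u : ℕ → X // ∀ x : X, IsGromovSeq x u}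

/-- Two Gromov sequences are equivalent if their mutual Gromov products tend to infinity. -/
def gromovRel (u v : GromovSeq X) : Prop :=
  ∀ x : X, Tendsto (fun p : ℕ × ℕ => gromovProd x (u.1 p.1) (v.1 p.2)) atTop atTop

/-- The Gromov boundary of `X`. -/
def GromovBoundary (X : Type*) [MetricSpace X] : Type _ :=
  Quot (gromovRel (X := X))

/-- A sequence in `X` converges to the boundary point `ξ`. -/
def SeqConvToBoundary (u : ℕ → X) (ξ : GromovBoundary X) : Prop :=
  ∃ h : ∀ x : X, IsGromovSeq x u, Quot.mk gromovRel (⟨u, h⟩ : GromovSeq X) = ξ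

/-- The isometry group of `X`. -/
abbrev Iso (X : Type*) [MetricSpace X] := X ≃ᵢ X

/-- The compact-open topology on the isometry group. -/
instance : TopologicalSpace (Iso X) :=
  TopologicalSpace.induced (fun g : Iso X => (ContinuousMap.mk g g.continuous : C(X, X)))
    ContinuousMap.compactOpen

lemma gromovProd_isometry (g : Iso X) (x y z : X) :
    gromovProd x (g y) (g z) = gromovProd (g.symm x) y z := by
  have h1 : dist (g y) x = dist y (g.symm x) := by
    conv_lhs => rw [← g.apply_symm_apply x]
    rw [g.dist_eq]
  have h2 : dist (g z) x = dist z (g.symm x) := by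
    conv_lhs => rw [← g.apply_symm_apply x]
    rw [g.dist_eq]
  unfold gromovProd
  rw [h1, h2, g.dist_eq]

lemma isGromovSeq_comp (g : Iso X) {u : ℕ → X} (h : ∀ x : X, IsGromovSeq x u) (x : X) :
    IsGromovSeq x (fun n => g (u n)) := by
  have hx := h (g.symm x)
  unfold IsGromovSeq at hx ⊢
  simp only [gromovProd_isometry]
  exact hx

/-- An isometry maps Gromov sequences to Gromov sequences. -/
def GromovSeq.map (g : Iso X) (u : GromovSeq X) : GromovSeq X :=
  ⟨fun n => g (u.1 n), fun x => isGromovSeq_comp g u.2 x⟩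

lemma gromovRel_map (g : Iso X) {u v : GromovSeq X} (h : gromovRel u v) :
    gromovRel (u.map g) (v.map g) := by
  intro x
  have hx := h (g.symm x)
  show Tendsto (fun p : ℕ × ℕ => gromovProd x (g (u.1 p.1)) (g (v.1 p.2))) atTop atTop
  simp only [gromovProd_isometry]
  exact hx

/-- The induced action of an isometry on the Gromov boundary. -/
def boundaryMap (g : Iso X) : GromovBoundary X → GromovBoundary X :=
  Quot.map (GromovSeq.map g) (fun _ _ h => gromovRel_map g h)

/-- The Gromov product of two boundary points, based at `x`. -/
def gromovProdB (x : X) (ξ η : GromovBoundary X) : ℝ≥0∞ :=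
  ⨆ (u : GromovSeq X) (_ : Quot.mk gromovRel u = ξ) (v : GromovSeq X) (_ : Quot.mk gromovRel v = η),
    Filter.liminf (fun p : ℕ × ℕ => ENNReal.ofReal (gromovProd x (u.1 p.1) (v.1 p.2))) atTop

/-- The (visual) topology on the Gromov boundary. -/
instance : TopologicalSpace (GromovBoundary X) where
  IsOpen U := ∀ ξ ∈ U, ∀ x : X, ∃ R : ℝ≥0∞, R ≠ ⊤ ∧ {η | R < gromovProdB x ξ η} ⊆ U
  isOpen_univ := fun _ _ _ => ⟨0, ENNReal.zero_ne_top, Set.subset_univ _⟩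
  isOpen_inter := by
    intro U V hU hV ξ hξ x
    obtain ⟨R₁, hR₁, hs₁⟩ := hU ξ hξ.1 x
    obtain ⟨R₂, hR₂, hs₂⟩ := hV ξ hξ.2 x
    refine ⟨max R₁ R₂, (max_lt hR₁.lt_top hR₂.lt_top).ne, fun η hη => ?_⟩
    rw [Set.mem_setOf_eq, max_lt_iff] at hη
    exact ⟨hs₁ hη.1, hs₂ hη.2⟩
  isOpen_sUnion := by
    intro S hS ξ hξ x
    obtain ⟨U, hUS, hξU⟩ := hξ
    obtain ⟨R, hR, hsub⟩ := hS U hUS ξ hξU x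
    exact ⟨R, hR, hsub.trans (Set.subset_sUnion_of_mem hUS)⟩

/-- The limit set of a subgroup of the isometry group: all accumulation points in the
Gromov boundary of an orbit in `X`. -/
def limitSet (G : Subgroup (Iso X)) : Set (GromovBoundary X) :=
  {ξ | ∃ (x : X) (g : ℕ → G), SeqConvToBoundary (fun n => (g n : Iso X) x) ξ}

/-- A subgroup of the isometry group is elementary if its limit set contains at most two
points. -/
def IsElementary (G : Subgroup (Iso X)) : Prop :=
  ∃ a b : GromovBoundary X, limitSet G ⊆ {a, b}

/-- `g` is a hyperbolic isometry with attracting fixed point `a` and repelling fixed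
point `b`. -/
def IsHyperbolicWithFP (g : Iso X) (a b : GromovBoundary X) : Prop :=
  a ≠ b ∧ boundaryMap g a = a ∧ boundaryMap g b = b ∧
    (∀ x : X, SeqConvToBoundary (fun n => (g ^ n) x) a) ∧
    (∀ x : X, SeqConvToBoundary (fun n => (g⁻¹ ^ n) x) b)

/-- `g` is a hyperbolic isometry. -/
def IsHyperbolicIsom (g : Iso X) : Prop :=
  ∃ a b : GromovBoundary X, IsHyperbolicWithFP g a b

/-- `(x,y,z)` is a triple of pairwise distinct points of the limit set of `G`. -/
def InTripleSpace (G : Subgroup (Iso X)) (x y z : GromovBoundary X) : Prop :=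
  x ∈ limitSet G ∧ y ∈ limitSet G ∧ z ∈ limitSet G ∧ x ≠ y ∧ x ≠ z ∧ y ≠ z

/-- The space of triples of pairwise distinct points in the limit set of `G`. -/
def tripleSet (G : Subgroup (Iso X)) :
    Set (GromovBoundary X × GromovBoundary X × GromovBoundary X) :=
  {t | InTripleSpace G t.1 t.2.1 t.2.2}

/-- `G` acts transitively on the complement of the diagonal in `Λ × Λ`. -/
def ActsTransitivelyOffDiagonal (G : Subgroup (Iso X)) : Prop :=
  ∀ p q : GromovBoundary X × GromovBoundary X,
    p.1 ∈ limitSet G → p.2 ∈ limitSet G → p.1 ≠ p.2 →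
    q.1 ∈ limitSet G → q.2 ∈ limitSet G → q.1 ≠ q.2 →
    ∃ h : G, (boundaryMap (h : Iso X) p.1, boundaryMap (h : Iso X) p.2) = q

/-- `γ` is a geodesic ray from `x` to the boundary point `a`. -/
def IsGeodesicRayTo (γ : ℝ → X) (x : X) (a : GromovBoundary X) : Prop :=
  γ 0 = x ∧ (∀ s ∈ Set.Ici (0 : ℝ), ∀ t ∈ Set.Ici (0 : ℝ), dist (γ s) (γ t) = |s - t|) ∧
    SeqConvToBoundary (fun n => γ n) a

/-- `γ` is a biinfinite geodesic from the boundary point `b` to the boundary point `a`. -/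
def IsGeodesicLine (γ : ℝ → X) (b a : GromovBoundary X) : Prop :=
  (∀ s t : ℝ, dist (γ s) (γ t) = |s - t|) ∧
    SeqConvToBoundary (fun n => γ n) a ∧ SeqConvToBoundary (fun n => γ (-(n : ℝ))) b

/-- The Busemann function `β_a(y,x)`. -/
def busemann (a : GromovBoundary X) (y x : X) : ℝ :=
  sSup {r : ℝ | ∃ γ : ℝ → X, IsGeodesicRayTo γ x a ∧
    r = Filter.limsup (fun t : ℝ => dist y (γ t) - t) Filter.atTop}

section Cochains

variable {G : Type*} {E : Type*} [AddCommGroup E]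

/-- The homogeneous coboundary of a `1`-cochain. -/
def coboundaryOf (h : G → G → E) : G → G → G → E :=
  fun a b c => h b c - h a c + h a b

/-- The homogeneous cocycle condition for a `2`-cochain (a function of three variables). -/
def IsCocycle3 (f : G → G → G → E) : Prop :=
  ∀ a b c d : G, f b c d - f a c d + f a b d - f a b c = 0

end Cochains

/-- `ρ` is a distance function. -/
def IsMetricDist {α : Type*} (ρ : α → α → ℝ) : Prop :=
  (∀ a, ρ a a = 0) ∧ (∀ a b, a ≠ b → 0 < ρ a b) ∧ (∀ a b, ρ a b = ρ b a) ∧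
    ∀ a b c, ρ a c ≤ ρ a b + ρ b c

/-- The topology induced by a distance function. -/
def distTopology {α : Type*} (ρ : α → α → ℝ) : TopologicalSpace α :=
  TopologicalSpace.generateFrom {U | ∃ (c : α) (r : ℝ), U = {y | ρ c y < r}}

/-- A topological space is locally euclidean. -/
def LocallyEuclidean (G : Type*) [TopologicalSpace G] : Prop :=
  ∃ n : ℕ, ∀ x : G, ∃ U : Set G, IsOpen U ∧ x ∈ U ∧
    ∃ V : Set (Fin n → ℝ), IsOpen V ∧ Nonempty (U ≃ₜ V)

/-- A proper cocompact continuous isometric action of `L` on a proper geodesic Gromov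
hyperbolic space. -/
structure GeomHypActionOn (L : Type*) [Group L] [TopologicalSpace L]
    (Y : Type) [MetricSpace Y] where
  properY : ProperSpace Y
  geodesicY : GeodesicSpace Y
  hypY : GromovHyperbolic Y
  act : L →* Iso Y
  continuous_act : Continuous fun p : L × Y => act p.1 p.2
  proper_act : ∀ K : Set Y, IsCompact K → IsCompact {g : L | ¬Disjoint ((act g) '' K) K}
  cocompact_act : ∃ K : Set Y, IsCompact K ∧ ⋃ g : L, (act g) '' K = Set.univ

/-- `L` acts geometrically on some proper geodesic Gromov hyperbolic space. (For a
connected semisimple Lie group with finite center this characterizes the groups of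
real rank one.) -/
def ActsGeometricallyOnHypSpace (L : Type*) [Group L] [TopologicalSpace L] : Prop :=
  ∃ (Y : Type) (m : MetricSpace Y), Nonempty (@GeomHypActionOn L _ _ Y m)

/-- `L` is a simple Lie group of (real) rank one. -/
def IsSimpleLieGroupOfRankOne (L : Type*) [Group L] [TopologicalSpace L] : Prop :=
  IsTopologicalGroup L ∧ LocallyEuclidean L ∧ IsConnected (Set.univ : Set L) ∧
    (∃ g h : L, g * h ≠ h * g) ∧ ¬IsCompact (Set.univ : Set L) ∧
    (∀ N : Subgroup L, N.Normal → N ≤ Subgroup.center L ∨ N = ⊤) ∧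
    ActsGeometricallyOnHypSpace L

/-- `G` is a compact extension of a simple Lie group of rank one: it has a compact normal
subgroup such that the quotient is a simple Lie group of rank one. -/
def IsCompactExtensionOfRankOneSimple (G : Type*) [Group G] [TopologicalSpace G] : Prop :=
  ∃ K : Subgroup G, ∃ hK : K.Normal, IsCompact (K : Set G) ∧
    (letI := hK; IsSimpleLieGroupOfRankOne (G ⧸ K))

/-- `G` is a compact extension of a totally disconnected locally compact group. -/
def IsCompactExtensionOfTotallyDisconnected (G : Type*) [Group G] [TopologicalSpace G] : Prop :=
  ∃ K : Subgroup G, K.Normal ∧ IsCompact (K : Set G) ∧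
    TotallyDisconnectedSpace (G ⧸ K) ∧ LocallyCompactSpace (G ⧸ K)

/-- Semisimplicity of a Lie group: the solvable radical is trivial. -/
def HasTrivialSolvableRadical (G : Type*) [Group G] [TopologicalSpace G] : Prop :=
  ∀ N : Subgroup G, N.Normal → IsClosed (N : Set G) → IsConnected (N : Set G) →
    IsSolvable N → N = ⊥

/-- All compact normal subgroups are finite (no compact factors, for a semisimple Lie
group with finite center). -/
def HasNoCompactFactors (G : Type*) [Group G] [TopologicalSpace G] : Prop :=
  ∀ N : Subgroup G, N.Normal → IsCompact (N : Set G) → (N : Set G).Finite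

/-- The center of `G` is finite. -/
def HasFiniteCenter (G : Type*) [Group G] : Prop :=
  (Subgroup.center G : Set G).Finite

/-- For a semisimple Lie group with finite center and no compact factors: rank at least
two, i.e. the group is noncompact and not of rank one (it acts geometrically on no
Gromov hyperbolic space). -/
def HasRankAtLeastTwo (G : Type*) [Group G] [TopologicalSpace G] : Prop :=
  ¬IsCompact (Set.univ : Set G) ∧ ¬ActsGeometricallyOnHypSpace G

/-- `G` has no factors of rank one: there is no continuous surjective homomorphism from
`G` onto a simple Lie group of rank one. -/
def HasNoRankOneFactors (G : Type*) [Group G] [TopologicalSpace G] : Prop :=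
  ∀ (L : Type) [Group L] [TopologicalSpace L],
    IsSimpleLieGroupOfRankOne L → ∀ f : G →* L, Continuous f → ¬Function.Surjective f

/-- `Γ` is a lattice in `G` (with respect to the Haar measure `μ`): a discrete subgroup
admitting a Borel fundamental domain of finite Haar measure. -/
def IsLattice {G : Type*} [Group G] [TopologicalSpace G] [MeasurableSpace G]
    (Γ : Subgroup G) (μ : Measure G) : Prop :=
  IsClosed (Γ : Set G) ∧ DiscreteTopology Γ ∧
    ∃ D : Set G, MeasurableSet D ∧ μ D ≠ ⊤ ∧ ∀ g : G, ∃! γ : Γ, (γ : G) * g ∈ D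

/-- `Γ` is an irreducible lattice in `G`: its projection to each factor is dense. -/
def IsIrreducibleLattice {G : Type*} [Group G] [TopologicalSpace G] [MeasurableSpace G]
    (Γ : Subgroup G) (μ : Measure G) : Prop :=
  IsLattice Γ μ ∧ ∀ N : Subgroup G, N.Normal → IsClosed (N : Set G) →
    ¬IsCompact (N : Set G) → N ≠ ⊤ → Dense ((Γ ⊔ N : Subgroup G) : Set G)

/-- Amenability of a topological group: there is a left-invariant mean on the bounded
continuous functions. -/
def IsAmenableTopGroup (G : Type*) [Group G] [TopologicalSpace G] : Prop :=
  ∃ m : BoundedContinuousFunction G ℝ →ₗ[ℝ] ℝ,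
    (∀ f : BoundedContinuousFunction G ℝ, (∀ x, 0 ≤ f x) → 0 ≤ m f) ∧
    m (BoundedContinuousFunction.const G 1) = 1 ∧
    ∀ (g : G) (f f' : BoundedContinuousFunction G ℝ), (∀ x, f' x = f (g * x)) → m f' = m f

/-- The action of `Γ` on `(S,ν)` is measure preserving. -/
def IsMeasurePreservingSMul (Γ : Type*) [Group Γ] (S : Type*) [MeasurableSpace S]
    [MulAction Γ S] (ν : Measure S) : Prop :=
  ∀ γ : Γ, MeasurePreserving (fun s : S => γ • s) ν ν

/-- The action of `Γ` on `(S,ν)` is mildly mixing: there are no nontrivial recurrent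
sets. -/
def MildlyMixingSMul (Γ : Type*) [Group Γ] (S : Type*) [MeasurableSpace S] [MulAction Γ S]
    (ν : Measure S) : Prop :=
  ∀ A : Set S, MeasurableSet A → ν A ≠ 0 → ν A ≠ ν Set.univ →
    ∀ g : ℕ → Γ, Tendsto g atTop Filter.cofinite →
      Filter.liminf (fun i => ν (symmDiff A (g i • A))) atTop ≠ 0

/-- An `Iso X`-valued cocycle for a measure preserving action of `Γ` on `(S,ν)`. -/
def IsIsoCocycle {Γ : Type*} [Group Γ] {S : Type*} [MeasurableSpace S] [MulAction Γ S]
    (ν : Measure S) {X : Type*} [MetricSpace X] (α : Γ → S → Iso X) : Prop :=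
  (∀ γ : Γ, @Measurable S (Iso X) _ (borel (Iso X)) (α γ)) ∧
    ∀ g h : Γ, ∀ᵐ s ∂ν, α (g * h) s = α g (h • s) * α h s

/-- The cocycle `α` is cohomologous to a cocycle taking values in the subgroup `H`. -/
def IsCohomologousToCocycleInto {Γ : Type*} [Group Γ] {S : Type*} [MeasurableSpace S]
    [MulAction Γ S] (ν : Measure S) {X : Type*} [MetricSpace X] (α : Γ → S → Iso X)
    (H : Subgroup (Iso X)) : Prop :=
  ∃ β : Γ → S → Iso X, IsIsoCocycle ν β ∧ (∀ γ : Γ, ∀ᵐ s ∂ν, β γ s ∈ H) ∧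
    ∃ φ : S → Iso X, @Measurable S (Iso X) _ (borel (Iso X)) φ ∧
      ∀ γ : Γ, ∀ᵐ s ∂ν, φ (γ • s) * α γ s = β γ s * φ s

/-- `(B, lam)` is a strong boundary for `G`: a standard Borel `G`-space with a
quasi-invariant ergodic probability measure such that the action is amenable (here:
admits equivariant Furstenberg maps into spaces of probability measures on compact
metrizable `G`-spaces) and doubly ergodic with coefficients in every separable Banach
module for `G`. -/
def IsStrongBoundary (G : Type*) [Group G] [TopologicalSpace G] [MeasurableSpace G]
    (B : Type*) [MeasurableSpace B] [MulAction G B] (lam : Measure B) : Prop :=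
  IsProbabilityMeasure lam ∧
  Measurable (fun p : G × B => p.1 • p.2) ∧
  (∀ g : G, Measure.map (fun b : B => g • b) lam ≪ lam ∧
    lam ≪ Measure.map (fun b : B => g • b) lam) ∧
  (∀ A : Set B, MeasurableSet A → (∀ g : G, (fun b : B => g • b) ⁻¹' A = A) →
    lam A = 0 ∨ lam A = 1) ∧
  (∀ (Z : Type) [TopologicalSpace Z] [CompactSpace Z] [TopologicalSpace.MetrizableSpace Z]
      [MeasurableSpace Z] [BorelSpace Z] (actZ : G → Z → Z),
      Continuous (fun p : G × Z => actZ p.1 p.2) →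
      (∀ z : Z, actZ 1 z = z) → (∀ g h z, actZ (g * h) z = actZ g (actZ h z)) →
      ∃ Φ : B → ProbabilityMeasure Z,
        @Measurable B (ProbabilityMeasure Z) _ (borel (ProbabilityMeasure Z)) Φ ∧
        ∀ g : G, ∀ᵐ b ∂lam, (Φ (g • b) : Measure Z) = Measure.map (actZ g) (Φ b : Measure Z)) ∧
  (∀ (E : Type) [NormedAddCommGroup E] [NormedSpace ℝ E] [MeasurableSpace E] [BorelSpace E]
      [TopologicalSpace.SeparableSpace E] (actE : G → E → E),
      (∀ v : E, actE 1 v = v) → (∀ g h v, actE (g * h) v = actE g (actE h v)) →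
      (∀ g : G, IsLinearMap ℝ (actE g)) → (∀ (g : G) (v : E), ‖actE g v‖ = ‖v‖) →
      Continuous (fun p : G × E => actE p.1 p.2) →
      ∀ F : B × B → E, Measurable F → (∃ C, ∀ p, ‖F p‖ ≤ C) →
        (∀ g : G, ∀ᵐ p ∂(lam.prod lam), F (g • p.1, g • p.2) = actE g (F p)) →
        ∃ c : E, F =ᵐ[lam.prod lam] fun _ => c)

/-- `X` has bounded growth: for some `b > 0`, every ball of radius `R ≥ 1` contains at
most `b·e^{bR}` disjoint balls of radius `1`. -/
def BoundedGrowth (X : Type*) [MetricSpace X] : Prop :=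
  ∃ b : ℝ, 0 < b ∧ ∀ R : ℝ, 1 ≤ R → ∀ x : X, ∀ t : Finset X,
    (∀ y ∈ t, Metric.ball y 1 ⊆ Metric.ball x R) →
    ((t : Set X).Pairwise fun y z => Disjoint (Metric.ball y 1) (Metric.ball z 1)) →
    (t.card : ℝ) ≤ b * Real.exp (b * R)

/-- The action of `Γ` on `X` given by `ρ` is properly discontinuous. -/
def ProperlyDiscontinuousIso {Γ : Type*} [Group Γ] {X : Type*} [MetricSpace X]
    (ρ : Γ →* Iso X) : Prop :=
  ∀ K : Set X, IsCompact K → {γ : Γ | ¬Disjoint ((ρ γ) '' K) K}.Finite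



section AuxA

variable {X : Type*} [MetricSpace X]

lemma gp_comm (x y z : X) : gromovProd x y z = gromovProd x z y := by
  unfold gromovProd; rw [dist_comm z y]; ring

lemma gp_le_left (x y z : X) : gromovProd x y z ≤ dist y x := by
  unfold gromovProd
  have h := dist_triangle z y x
  rw [dist_comm z y] at h
  linarith [dist_comm y x, dist_comm z x, dist_triangle z y x]

lemma gp_nonneg (x y z : X) : 0 ≤ gromovProd x y z := by
  unfold gromovProd
  have := dist_triangle y x z
  linarith [dist_comm x z]

lemma gp_base (x w p q : X) : gromovProd w p q - dist x w ≤ gromovProd x p q := by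
  unfold gromovProd
  have h1 := dist_triangle p x w
  have h2 := dist_triangle q x w
  linarith [dist_comm x w]

lemma gp_move (w p q p' q' : X) :
    gromovProd w p' q' - dist p p' - dist q q' ≤ gromovProd w p q := by
  unfold gromovProd
  have h1 := dist_triangle p' p w
  have h2 := dist_triangle q' q w
  have h3 := dist_triangle4 p p' q' q
  rw [dist_comm p' p] at h1
  linarith [dist_comm q' q, dist_comm q' q]

lemma dist_ge_gp {s : Set X} {x z : X} (hseg : IsGeodesicSegmentSet s x z)
    {p : X} (hp : p ∈ s) (w : X) : gromovProd w x z ≤ dist w p := by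
  obtain ⟨f, ⟨hf0, hfL, hiso⟩, rfl⟩ := hseg
  obtain ⟨u, hu, rfl⟩ := hp
  have hxz : (0:ℝ) ≤ dist x z := dist_nonneg
  have hdx : dist (f u) x = u := by
    have h := hiso u hu 0 ⟨le_refl _, hxz⟩
    rw [hf0] at h
    rw [h, abs_of_nonneg (by linarith [hu.1])]; ring
  have hdz : dist (f u) z = dist x z - u := by
    have h := hiso u hu (dist x z) ⟨hxz, le_refl _⟩
    rw [hfL] at h
    rw [h, abs_of_nonpos (by linarith [hu.2])]; ring
  unfold gromovProd
  have h1 := dist_triangle x (f u) w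
  have h2 := dist_triangle z (f u) w
  rw [dist_comm x (f u), hdx] at h1
  rw [dist_comm z (f u), hdz] at h2
  linarith [dist_comm x w, dist_comm z w, dist_comm w (f u)]

end AuxA
section AuxB

variable {X : Type*} [MetricSpace X] {κ₀ : ℝ}

lemma seg_exists (hgeo : GeodesicSpace X) (x y : X) :
    ∃ s : Set X, IsGeodesicSegmentSet s x y := by
  obtain ⟨f, hf⟩ := hgeo x y
  exact ⟨f '' Set.Icc 0 (dist x y), f, hf, rfl⟩

lemma exists_thin_pt (hgeo : GeodesicSpace X) (hthin : DeltaThinTriangles X κ₀)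
    (w x z : X) {s : Set X} (hseg : IsGeodesicSegmentSet s x z) :
    ∃ p ∈ s, dist w p ≤ gromovProd w x z + 2 * κ₀ := by
  obtain ⟨A, hA⟩ := seg_exists hgeo x w
  obtain ⟨B, hB⟩ := seg_exists hgeo w z
  obtain ⟨f, hfb, hs⟩ := hseg
  obtain ⟨hf0, hfL, hiso⟩ := hfb
  set u := gromovProd x w z with hu
  have hu0 : 0 ≤ u := gp_nonneg x w z
  have huL : u ≤ dist x z := by
    rw [hu]; unfold gromovProd
    linarith [dist_triangle w z x, dist_comm z x]
  have hmem : f u ∈ s := by rw [hs]; exact ⟨u, ⟨hu0, huL⟩, rfl⟩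
  obtain ⟨q, hq, hdq⟩ := hthin x w z A B s hA hB ⟨f, ⟨hf0, hfL, hiso⟩, hs⟩ (f u) hmem
  have hdxm : dist x (f u) = u := by
    have h := hiso 0 ⟨le_refl _, dist_nonneg⟩ u ⟨hu0, huL⟩
    rw [hf0] at h
    rw [h, abs_of_nonpos (by linarith)]; ring
  have hdzm : dist (f u) z = dist x z - u := by
    have h := hiso u ⟨hu0, huL⟩ (dist x z) ⟨dist_nonneg, le_refl _⟩
    rw [hfL] at h
    rw [h, abs_of_nonpos (by linarith)]; ring
  refine ⟨f u, hmem, ?_⟩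
  rcases hq with hqA | hqB
  · obtain ⟨g, ⟨hg0, hgL, hgiso⟩, hA'⟩ := hA
    rw [hA'] at hqA
    obtain ⟨v, hv, rfl⟩ := hqA
    have hdxq : dist x (g v) = v := by
      have h := hgiso 0 ⟨le_refl _, dist_nonneg⟩ v hv
      rw [hg0] at h
      rw [h, abs_of_nonpos (by linarith [hv.1])]; ring
    have hdwq : dist (g v) w = dist x w - v := by
      have h := hgiso v hv (dist x w) ⟨dist_nonneg, le_refl _⟩
      rw [hgL] at h
      rw [h, abs_of_nonpos (by linarith [hv.2])]; ring
    have hvu : u - κ₀ ≤ v := by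
      have h := dist_triangle x (g v) (f u)
      linarith [hdxm, hdxq, hdq, dist_comm (g v) (f u), dist_comm (f u) (g v)]
    have hbd : dist w (f u) ≤ dist x w - u + 2 * κ₀ := by
      have h := dist_triangle w (g v) (f u)
      linarith [hdwq, hdq, dist_comm w (g v), dist_comm (f u) (g v)]
    have hfin : dist x w - u + 2 * κ₀ ≤ gromovProd w x z + 2 * κ₀ := by
      rw [hu]; unfold gromovProd
      linarith [dist_comm w x, dist_comm z x, dist_comm x w, dist_comm z w, dist_comm w z,
        dist_comm x z]
    linarith
  · obtain ⟨g, ⟨hg0, hgL, hgiso⟩, hB'⟩ := hB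
    rw [hB'] at hqB
    obtain ⟨v, hv, rfl⟩ := hqB
    have hdwq : dist w (g v) = v := by
      have h := hgiso 0 ⟨le_refl _, dist_nonneg⟩ v hv
      rw [hg0] at h
      rw [h, abs_of_nonpos (by linarith [hv.1])]; ring
    have hdzq : dist (g v) z = dist w z - v := by
      have h := hgiso v hv (dist w z) ⟨dist_nonneg, le_refl _⟩
      rw [hgL] at h
      rw [h, abs_of_nonpos (by linarith [hv.2])]; ring
    have hvz : dist x z - u - κ₀ ≤ dist w z - v := by
      have h := dist_triangle (f u) (g v) z
      linarith [hdzm, hdzq, hdq, dist_comm (f u) (g v)]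
    have hbd : dist w (f u) ≤ u + dist w z - dist x z + 2 * κ₀ := by
      have h := dist_triangle w (g v) (f u)
      linarith [hdwq, hdq, dist_comm (f u) (g v)]
    have hfin : u + dist w z - dist x z + 2 * κ₀ ≤ gromovProd w x z + 2 * κ₀ := by
      rw [hu]; unfold gromovProd
      linarith [dist_comm w x, dist_comm z x, dist_comm x w, dist_comm z w, dist_comm w z,
        dist_comm x z]
    linarith

lemma four_pt (hgeo : GeodesicSpace X) (hthin : DeltaThinTriangles X κ₀)
    (w x y z : X) :
    min (gromovProd w x y) (gromovProd w y z) ≤ gromovProd w x z + 3 * κ₀ := by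
  obtain ⟨s, hs⟩ := seg_exists hgeo x z
  obtain ⟨p, hp, hdp⟩ := exists_thin_pt hgeo hthin w x z hs
  obtain ⟨A, hA⟩ := seg_exists hgeo x y
  obtain ⟨B, hB⟩ := seg_exists hgeo y z
  obtain ⟨q, hq, hdq⟩ := hthin x y z A B s hA hB hs p hp
  rcases hq with hqA | hqB
  · have h1 : gromovProd w x y ≤ dist w q := dist_ge_gp hA hqA w
    have h2 : dist w q ≤ dist w p + κ₀ := by
      have := dist_triangle w p q
      linarith
    calc min (gromovProd w x y) (gromovProd w y z) ≤ gromovProd w x y := min_le_left _ _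
      _ ≤ dist w p + κ₀ := le_trans h1 h2
      _ ≤ gromovProd w x z + 3 * κ₀ := by linarith
  · have h1 : gromovProd w y z ≤ dist w q := dist_ge_gp hB hqB w
    have h2 : dist w q ≤ dist w p + κ₀ := by
      have := dist_triangle w p q
      linarith
    calc min (gromovProd w x y) (gromovProd w y z) ≤ gromovProd w y z := min_le_right _ _
      _ ≤ dist w p + κ₀ := le_trans h1 h2
      _ ≤ gromovProd w x z + 3 * κ₀ := by linarith
end AuxB
section AuxC

variable {X : Type*} [MetricSpace X]

lemma iso_mul_apply (g h : Iso X) (x : X) : (g * h) x = g (h x) := rfl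

lemma iso_one_apply (x : X) : (1 : Iso X) x = x := rfl

lemma gromovSeq_map_map (g h : Iso X) (u : GromovSeq X) :
    (u.map h).map g = u.map (g * h) := rfl

lemma boundaryMap_mk (g : Iso X) (u : GromovSeq X) :
    boundaryMap g (Quot.mk gromovRel u) = Quot.mk gromovRel (u.map g) := rfl

lemma boundaryMap_comp (g h : Iso X) (ξ : GromovBoundary X) :
    boundaryMap g (boundaryMap h ξ) = boundaryMap (g * h) ξ := by
  induction ξ using Quot.ind with
  | _ u => rfl

lemma boundaryMap_one (ξ : GromovBoundary X) : boundaryMap (1 : Iso X) ξ = ξ := by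
  induction ξ using Quot.ind with
  | _ u => exact congrArg (Quot.mk _) (Subtype.ext rfl)

lemma bmap_fix_inv {g : Iso X} {a : GromovBoundary X} (h : boundaryMap g a = a) :
    boundaryMap g⁻¹ a = a := by
  conv_lhs => rw [← h]
  rw [boundaryMap_comp, inv_mul_cancel, boundaryMap_one]

lemma bmap_fix_mul {g h : Iso X} {a : GromovBoundary X}
    (hg : boundaryMap g a = a) (hh : boundaryMap h a = a) :
    boundaryMap (g * h) a = a := by
  rw [← boundaryMap_comp, hh, hg]

lemma bmap_fix_zpow {g : Iso X} {a : GromovBoundary X} (h : boundaryMap g a = a) :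
    ∀ k : ℤ, boundaryMap (g ^ k) a = a := by
  have hnat : ∀ n : ℕ, boundaryMap (g ^ n) a = a := by
    intro n
    induction n with
    | zero => simpa using boundaryMap_one a
    | succ n ih => rw [pow_succ]; exact bmap_fix_mul ih h
  intro k
  induction k using Int.rec with
  | ofNat n => simpa using hnat n
  | negSucc n =>
      rw [zpow_negSucc]
      exact bmap_fix_inv (hnat (n+1))

end AuxC
section AuxD

variable {X : Type*} [MetricSpace X] {κ₀ : ℝ}

lemma tendsto_pair_of {F : ℕ × ℕ → ℝ}
    (h : ∀ M : ℝ, ∃ N : ℕ, ∀ p q : ℕ, N ≤ p → N ≤ q → M ≤ F (p, q)) :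
    Tendsto F atTop atTop := by
  rw [Filter.tendsto_atTop]
  intro M
  obtain ⟨N, hN⟩ := h M
  rw [eventually_atTop]
  refine ⟨(N, N), fun b hb => ?_⟩
  have hb' := Prod.le_def.mp hb
  simpa using hN b.1 b.2 hb'.1 hb'.2

lemma tendsto_pair_elim {F : ℕ × ℕ → ℝ} (h : Tendsto F atTop atTop) (M : ℝ) :
    ∃ N : ℕ, ∀ p q : ℕ, N ≤ p → N ≤ q → M ≤ F (p, q) := by
  rw [Filter.tendsto_atTop] at h
  have h2 := h M
  rw [eventually_atTop] at h2
  obtain ⟨a, ha⟩ := h2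
  exact ⟨max a.1 a.2, fun p q hp hq =>
    ha (p, q) (Prod.le_def.mpr ⟨le_trans (le_max_left _ _) hp, le_trans (le_max_right _ _) hq⟩)⟩

lemma gromovRel_refl (u : GromovSeq X) : gromovRel u u := fun x => u.2 x

lemma gromovRel_symm {u v : GromovSeq X} (h : gromovRel u v) : gromovRel v u := by
  intro x
  have hswap : Tendsto (Prod.swap : ℕ × ℕ → ℕ × ℕ) atTop atTop := by
    rw [← prod_atTop_atTop_eq]
    exact tendsto_snd.prodMk tendsto_fst
  have h2 := (h x).comp hswap
  refine h2.congr (fun p => ?_)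
  simp only [Function.comp_apply, Prod.swap]
  exact gp_comm x (u.1 p.2) (v.1 p.1)

lemma gromovRel_trans (hgeo : GeodesicSpace X) (hthin : DeltaThinTriangles X κ₀)
    {u v w : GromovSeq X} (huv : gromovRel u v) (hvw : gromovRel v w) : gromovRel u w := by
  intro x
  apply tendsto_pair_of
  intro M
  obtain ⟨N₁, h₁⟩ := tendsto_pair_elim (huv x) (M + 3 * κ₀)
  obtain ⟨N₂, h₂⟩ := tendsto_pair_elim (hvw x) (M + 3 * κ₀)
  refine ⟨max N₁ N₂, fun p q hp hq => ?_⟩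
  set r := max N₁ N₂ with hr
  have ha := h₁ p r (le_trans (le_max_left _ _) hp) (le_max_left _ _)
  have hb := h₂ r q (le_max_right _ _) (le_trans (le_max_right _ _) hq)
  have h4 := four_pt hgeo hthin x (u.1 p) (v.1 r) (w.1 q)
  have hmin : M + 3 * κ₀ ≤ min (gromovProd x (u.1 p) (v.1 r)) (gromovProd x (v.1 r) (w.1 q)) :=
    le_min ha hb
  linarith

lemma gromovRel_equiv (hgeo : GeodesicSpace X) (hthin : DeltaThinTriangles X κ₀) :
    Equivalence (gromovRel (X := X)) :=
  ⟨gromovRel_refl, gromovRel_symm, gromovRel_trans hgeo hthin⟩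

lemma gromovRel_of_quot_eq (hgeo : GeodesicSpace X) (hthin : DeltaThinTriangles X κ₀)
    {u v : GromovSeq X} (h : Quot.mk gromovRel u = Quot.mk gromovRel v) : gromovRel u v :=
  ((gromovRel_equiv hgeo hthin).eqvGen_iff).mp (Quot.eq.mp h)

end AuxD
section AuxE

variable {X : Type*} [MetricSpace X] {a : GromovBoundary X}

lemma busemann_eq_sSup (a : GromovBoundary X) (y x : X) :
    busemann a y x = sSup {r : ℝ | ∃ γ : ℝ → X, IsGeodesicRayTo γ x a ∧
      r = Filter.limsup (fun t : ℝ => dist y (γ t) - t) Filter.atTop} := rfl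

lemma ray_dist_zero {γ : ℝ → X} {x : X} (hγ : IsGeodesicRayTo γ x a)
    {t : ℝ} (ht : 0 ≤ t) : dist x (γ t) = t := by
  have h := hγ.2.1 0 Set.self_mem_Ici t (Set.mem_Ici.mpr ht)
  rw [hγ.1] at h
  rw [h, zero_sub, abs_neg, abs_of_nonneg ht]

lemma ray_f_bounds {γ : ℝ → X} {x : X} (hγ : IsGeodesicRayTo γ x a) (y : X)
    {t : ℝ} (ht : 0 ≤ t) :
    -(dist y x) ≤ dist y (γ t) - t ∧ dist y (γ t) - t ≤ dist y x := by
  have hd : dist x (γ t) = t := ray_dist_zero hγ ht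
  constructor
  · have := dist_triangle x y (γ t)
    linarith [dist_comm x y]
  · have := dist_triangle y x (γ t)
    linarith

lemma ray_limsup_le_dist {γ : ℝ → X} {x : X} (hγ : IsGeodesicRayTo γ x a) (y : X) :
    Filter.limsup (fun t : ℝ => dist y (γ t) - t) Filter.atTop ≤ dist y x := by
  have hev : ∀ᶠ t : ℝ in atTop, dist y (γ t) - t ≤ dist y x := by
    filter_upwards [eventually_ge_atTop (0:ℝ)] with t ht
    exact (ray_f_bounds hγ y ht).2
  have hlb : Filter.IsBoundedUnder (· ≥ ·) Filter.atTop (fun t : ℝ => dist y (γ t) - t) := by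
    refine ⟨-(dist y x), ?_⟩
    simp only [eventually_map]
    filter_upwards [eventually_ge_atTop (0:ℝ)] with t ht
    exact (ray_f_bounds hγ y ht).1
  exact Filter.limsup_le_of_le hlb.isCoboundedUnder_le hev

lemma busemann_bddAbove (a : GromovBoundary X) (y x : X) :
    BddAbove {r : ℝ | ∃ γ : ℝ → X, IsGeodesicRayTo γ x a ∧
      r = Filter.limsup (fun t : ℝ => dist y (γ t) - t) Filter.atTop} := by
  refine ⟨dist y x, fun r hr => ?_⟩
  obtain ⟨γ, hγ, rfl⟩ := hr
  exact ray_limsup_le_dist hγ y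

lemma busemann_le_dist (a : GromovBoundary X) (y x : X) : busemann a y x ≤ dist y x := by
  rw [busemann_eq_sSup]
  apply Real.sSup_le _ dist_nonneg
  rintro r ⟨γ, hγ, rfl⟩
  exact ray_limsup_le_dist hγ y

lemma le_busemann {γ : ℝ → X} {x : X} (hγ : IsGeodesicRayTo γ x a) (y : X) :
    Filter.limsup (fun t : ℝ => dist y (γ t) - t) Filter.atTop ≤ busemann a y x :=
  le_csSup (busemann_bddAbove a y x) ⟨γ, hγ, rfl⟩

lemma eventually_ray_dist_le {γ : ℝ → X} {x : X} (hγ : IsGeodesicRayTo γ x a) (p : X) :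
    ∀ᶠ t : ℝ in atTop, dist p (γ t) ≤ t + busemann a p x + 1 := by
  have h1 : Filter.limsup (fun t : ℝ => dist p (γ t) - t) Filter.atTop
      < busemann a p x + 1 :=
    lt_of_le_of_lt (le_busemann hγ p) (by linarith)
  have hub : Filter.IsBoundedUnder (· ≤ ·) Filter.atTop (fun t : ℝ => dist p (γ t) - t) := by
    refine ⟨dist p x, ?_⟩
    simp only [eventually_map]
    filter_upwards [eventually_ge_atTop (0:ℝ)] with t ht
    exact (ray_f_bounds hγ p ht).2
  filter_upwards [eventually_lt_of_limsup_lt h1 hub] with t ht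
  linarith

end AuxE
section AuxF

variable {X : Type*} [MetricSpace X] {a : GromovBoundary X}

lemma iso_inv_apply_apply (g : Iso X) (x : X) : (g⁻¹ : Iso X) (g x) = x := by
  rw [← iso_mul_apply, inv_mul_cancel, iso_one_apply]

lemma iso_apply_inv_apply (g : Iso X) (x : X) : g ((g⁻¹ : Iso X) x) = x := by
  rw [← iso_mul_apply, mul_inv_cancel, iso_one_apply]

lemma ray_map {g : Iso X} (hfix : boundaryMap g a = a) {γ : ℝ → X} {x : X}
    (hγ : IsGeodesicRayTo γ x a) : IsGeodesicRayTo (fun t => g (γ t)) (g x) a := by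
  obtain ⟨h0, hiso, hs, heq⟩ := hγ
  refine ⟨by show g (γ 0) = g x; rw [h0], fun s hs' t ht' => by rw [g.dist_eq]; exact hiso s hs' t ht', ?_⟩
  refine ⟨isGromovSeq_comp g hs, ?_⟩
  have : (⟨fun n : ℕ => g (γ n), isGromovSeq_comp g hs⟩ : GromovSeq X)
      = GromovSeq.map g ⟨fun n : ℕ => γ n, hs⟩ := rfl
  rw [this]
  show boundaryMap g (Quot.mk gromovRel ⟨fun n : ℕ => γ n, hs⟩) = a
  rw [heq, hfix]

lemma ray_gp {γ : ℝ → X} {x : X} (hγ : IsGeodesicRayTo γ x a)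
    {u v : ℝ} (hu : 0 ≤ u) (hv : 0 ≤ v) :
    gromovProd x (γ u) (γ v) = min u v := by
  have hdu : dist x (γ u) = u := ray_dist_zero hγ hu
  have hdv : dist x (γ v) = v := ray_dist_zero hγ hv
  have hduv : dist (γ u) (γ v) = |u - v| := hγ.2.1 u (Set.mem_Ici.mpr hu) v (Set.mem_Ici.mpr hv)
  unfold gromovProd
  rw [dist_comm (γ u) x, dist_comm (γ v) x, hdu, hdv, hduv]
  rcases le_total u v with h | h
  · rw [abs_of_nonpos (by linarith), min_eq_left h]; ring
  · rw [abs_of_nonneg (by linarith), min_eq_right h]; ring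

lemma ray_shift {γ : ℝ → X} {x : X} (hγ : IsGeodesicRayTo γ x a)
    {t₀ : ℝ} (ht₀ : 0 ≤ t₀) : IsGeodesicRayTo (fun u => γ (t₀ + u)) (γ t₀) a := by
  obtain ⟨h0, hiso, hs, heq⟩ := hγ
  have hγ' : IsGeodesicRayTo γ x a := ⟨h0, hiso, hs, heq⟩
  have hdist : ∀ s ∈ Set.Ici (0:ℝ), ∀ t ∈ Set.Ici (0:ℝ),
      dist (γ (t₀ + s)) (γ (t₀ + t)) = |s - t| := by
    intro s hs' t ht'
    rw [hiso (t₀ + s) (Set.mem_Ici.mpr (by linarith [Set.mem_Ici.mp hs']))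
      (t₀ + t) (Set.mem_Ici.mpr (by linarith [Set.mem_Ici.mp ht']))]
    congr 1
    ring
  have hgs : ∀ w : X, IsGromovSeq w (fun n : ℕ => γ (t₀ + n)) := by
    intro w
    apply tendsto_pair_of
    intro M
    refine ⟨⌈M + dist w x⌉₊, fun p q hp hq => ?_⟩
    have h1 : gromovProd x (γ (t₀ + p)) (γ (t₀ + q)) = min (t₀ + p) (t₀ + q) :=
      ray_gp hγ' (by positivity) (by positivity)
    have h2 := gp_base w x (γ (t₀ + p)) (γ (t₀ + q))
    have hp' : (⌈M + dist w x⌉₊ : ℝ) ≤ p := Nat.cast_le.mpr hp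
    have hq' : (⌈M + dist w x⌉₊ : ℝ) ≤ q := Nat.cast_le.mpr hq
    have hc := Nat.le_ceil (M + dist w x)
    have : M + dist w x ≤ min (t₀ + p) (t₀ + q) := by
      apply le_min <;> linarith
    linarith [dist_comm w x, dist_comm x w]
  refine ⟨by simp, hdist, hgs, ?_⟩
  have hrel : gromovRel ⟨fun n : ℕ => γ (t₀ + n), hgs⟩ ⟨fun n : ℕ => γ n, hs⟩ := by
    intro w
    apply tendsto_pair_of
    intro M
    refine ⟨⌈M + dist w x⌉₊, fun p q hp hq => ?_⟩
    have h1 : gromovProd x (γ (t₀ + p)) (γ q) = min (t₀ + p) (q : ℝ) :=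
      ray_gp hγ' (by positivity) (Nat.cast_nonneg q)
    have h2 := gp_base w x (γ (t₀ + p)) (γ q)
    have hp' : (⌈M + dist w x⌉₊ : ℝ) ≤ p := Nat.cast_le.mpr hp
    have hq' : (⌈M + dist w x⌉₊ : ℝ) ≤ q := Nat.cast_le.mpr hq
    have hc := Nat.le_ceil (M + dist w x)
    have : M + dist w x ≤ min (t₀ + p) (q : ℝ) := by
      apply le_min <;> linarith
    linarith [dist_comm w x, dist_comm x w]
  exact (Quot.sound hrel).trans heq

lemma busemann_ge_param {γ : ℝ → X} {x : X} (hγ : IsGeodesicRayTo γ x a)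
    {t₀ : ℝ} (ht₀ : 0 ≤ t₀) : t₀ ≤ busemann a x (γ t₀) := by
  have hshift := ray_shift hγ ht₀
  have hval : Filter.limsup (fun t : ℝ => dist x ((fun u => γ (t₀ + u)) t) - t)
      Filter.atTop = t₀ := by
    have hev : ∀ᶠ t : ℝ in atTop,
        dist x ((fun u => γ (t₀ + u)) t) - t = t₀ := by
      filter_upwards [eventually_ge_atTop (0:ℝ)] with t ht
      have : dist x (γ (t₀ + t)) = t₀ + t := ray_dist_zero hγ (by linarith)
      simp only [this]
      ring
    rw [Filter.limsup_congr hev, Filter.limsup_const]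
  calc t₀ = _ := hval.symm
    _ ≤ busemann a x (γ t₀) := le_busemann hshift x

lemma busemann_isom {g : Iso X} (hfix : boundaryMap g a = a) (z x : X) :
    busemann a (g z) (g x) = busemann a z x := by
  rw [busemann_eq_sSup, busemann_eq_sSup]
  congr 1
  ext r
  constructor
  · rintro ⟨γ, hγ, rfl⟩
    refine ⟨fun t => (g⁻¹ : Iso X) (γ t), ?_, ?_⟩
    · have h := ray_map (bmap_fix_inv hfix) hγ
      rwa [iso_inv_apply_apply] at h
    · apply Filter.limsup_congr
      apply Filter.Eventually.of_forall
      intro t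
      have : dist z ((g⁻¹ : Iso X) (γ t)) = dist (g z) (γ t) := by
        conv_rhs => rw [show γ t = g ((g⁻¹ : Iso X) (γ t)) from (iso_apply_inv_apply g _).symm]
        rw [g.dist_eq]
      rw [this]
  · rintro ⟨γ, hγ, rfl⟩
    refine ⟨fun t => g (γ t), ray_map hfix hγ, ?_⟩
    apply Filter.limsup_congr
    apply Filter.Eventually.of_forall
    intro t
    rw [g.dist_eq]

end AuxF
section Key

variable {X : Type*} [MetricSpace X]

lemma key_hyperbolic (hgeo : GeodesicSpace X) {κ₀ : ℝ} (hκ : 0 < κ₀)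
    (hthin : DeltaThinTriangles X κ₀) {c : ℝ} (hc : 0 < c)
    (hcoc : ∀ (a : GromovBoundary X) (x y z : X),
      |busemann a z y - busemann a z x + busemann a y x| ≤ c)
    (g : Iso X) (a : GromovBoundary X) (hfix : boundaryMap g a = a)
    (y : X) (hbig : c < busemann a y (g y)) : IsHyperbolicIsom g := by
  classical
  -- basic cocycle consequences
  have hxx : ∀ p : X, |busemann a p p| ≤ c := by
    intro p
    have := hcoc a p p p
    have h2 : busemann a p p - busemann a p p + busemann a p p = busemann a p p := by ring
    rwa [h2] at this
  have antis_up : ∀ p q : X, busemann a p q + busemann a q p ≤ 2*c := by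
    intro p q
    have h1 := hcoc a q p q
    have h2 := hxx q
    rw [abs_le] at h1 h2
    linarith [h1.2]
  have antis_lo : ∀ p q : X, -(2*c) ≤ busemann a p q + busemann a q p := by
    intro p q
    have h1 := hcoc a q p q
    have h2 := hxx q
    rw [abs_le] at h1 h2
    linarith [h1.1]
  -- the orbit
  set T : ℤ → X := fun k => (g ^ k) y with hT
  have hT0 : T 0 = y := by simp [hT]
  have hTadd : ∀ j k : ℤ, (g ^ j) (T k) = T (j + k) := by
    intro j k
    show (g ^ j) ((g ^ k) y) = (g ^ (j + k)) y
    rw [zpow_add, iso_mul_apply]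
  have hT1 : T 1 = g y := by simp [hT]
  set Dz : ℤ → ℝ := fun k => dist y (T k) with hDz
  have hdistT : ∀ j k : ℤ, dist (T j) (T k) = Dz (k - j) := by
    intro j k
    have h1 : (g ^ j) (T (k - j)) = T k := by rw [hTadd]; congr 1; ring
    calc dist (T j) (T k) = dist ((g ^ j) y) ((g ^ j) (T (k - j))) := by rw [h1]
      _ = dist y (T (k - j)) := (g ^ j).dist_eq y (T (k - j))
  have hDz_neg : ∀ k : ℤ, Dz (-k) = Dz k := by
    intro k
    have h1 := hdistT k 0
    have h2 : (0 : ℤ) - k = -k := by ring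
    rw [h2] at h1
    rw [← h1, hT0, dist_comm]
  have prodT : ∀ j k : ℤ, gromovProd y (T j) (T k) = (Dz j + Dz k - Dz (k - j))/2 := by
    intro j k
    unfold gromovProd
    rw [hdistT j k, dist_comm (T j) y, dist_comm (T k) y]
  set S : ℤ → ℝ := fun k => busemann a y (T k) with hSdef
  have hS1 : c < S 1 := by rw [hSdef]; simpa [hT1] using hbig
  have hfixk := bmap_fix_zpow hfix
  have hequiv : ∀ j k : ℤ, busemann a (T j) (T (j + k)) = S k := by
    intro j k
    have h := busemann_isom (hfixk j) y (T k)
    rw [hTadd] at h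
    rw [show (g ^ j) y = T j from rfl] at h
    exact h
  have hBTy : ∀ k : ℤ, busemann a (T (-k)) y = S k := by
    intro k
    have h := hequiv (-k) k
    rw [show (-k + k : ℤ) = 0 from by ring, hT0] at h
    exact h
  have hcocS : ∀ k l : ℤ, S k + S l - c ≤ S (k + l) := by
    intro k l
    have h := hcoc a (T (k + l)) (T k) y
    rw [abs_le] at h
    have h2 : busemann a (T k) (T (k + l)) = S l := hequiv k l
    have e1 : busemann a y (T k) = S k := rfl
    have e2 : busemann a y (T (k + l)) = S (k + l) := rfl
    linarith [h.1, h.2]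
  obtain ⟨σ, hσdef⟩ : ∃ v : ℝ, v = S 1 - c := ⟨_, rfl⟩
  have hσ : 0 < σ := by rw [hσdef]; linarith
  have hSlb : ∀ n : ℤ, 1 ≤ n → σ * n ≤ S n := by
    refine fun n hn => Int.le_induction (motive := fun m _ => σ * (m:ℝ) ≤ S m) ?_ ?_ n hn
    · push_cast
      rw [hσdef]; linarith
    · intro m _ ih
      have h := hcocS m 1
      push_cast
      rw [hσdef] at ih ⊢
      nlinarith
  have hSD : ∀ k : ℤ, S k ≤ Dz k := fun k => busemann_le_dist a y (T k)
  have hDz_nonneg : ∀ k : ℤ, 0 ≤ Dz k := fun k => dist_nonneg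
  -- a geodesic ray from y to a
  have hSne : {r : ℝ | ∃ γ : ℝ → X, IsGeodesicRayTo γ (T 1) a ∧
      r = Filter.limsup (fun t : ℝ => dist y (γ t) - t) Filter.atTop}.Nonempty := by
    by_contra h
    rw [Set.not_nonempty_iff_eq_empty] at h
    have h0 : busemann a y (T 1) = 0 := by
      rw [busemann_eq_sSup, h, Real.sSup_empty]
    have : S 1 = 0 := h0
    linarith
  obtain ⟨r, γ₁, hγ₁, -⟩ := hSne
  set γ : ℝ → X := fun t => (g⁻¹ : Iso X) (γ₁ t) with hγdef
  have hray : IsGeodesicRayTo γ y a := by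
    have h := ray_map (bmap_fix_inv hfix) hγ₁
    have h2 : (g⁻¹ : Iso X) (T 1) = y := by rw [hT1, iso_inv_apply_apply]
    rwa [h2] at h
  have hdyγ : ∀ t : ℝ, 0 ≤ t → dist y (γ t) = t := fun t ht => ray_dist_zero hray ht
  have hBT_up : ∀ k : ℤ, busemann a (T k) y ≤ 2*c - S k := by
    intro k
    have h := antis_up y (T k)
    have e1 : busemann a y (T k) = S k := rfl
    linarith
  have EST1 : ∀ j : ℤ, 1 ≤ j →
      ∀ᶠ t : ℝ in atTop, S j - c - 1 ≤ gromovProd y (T j) (γ t) := by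
    intro j hj
    filter_upwards [eventually_ray_dist_le hray (T j), eventually_ge_atTop (0:ℝ)] with t h1 h2
    unfold gromovProd
    rw [dist_comm (γ t) y, hdyγ t h2, dist_comm (T j) y]
    have h3 := hBT_up j
    have h4 := hSD j
    linarith
  have FWD : ∀ j k : ℤ, 1 ≤ j → 1 ≤ k →
      min (S j) (S k) - (c + 1) - 3*κ₀ ≤ gromovProd y (T j) (T k) := by
    intro j k hj hk
    obtain ⟨t, h1, h2⟩ := ((EST1 j hj).and (EST1 k hk)).exists
    have h4 := four_pt hgeo hthin y (T j) (γ t) (T k)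
    have h3 : gromovProd y (γ t) (T k) = gromovProd y (T k) (γ t) := gp_comm _ _ _
    rcases le_total (S j) (S k) with hle | hle
    · rw [min_eq_left hle]
      have hm : S j - c - 1 ≤ min (gromovProd y (T j) (γ t)) (gromovProd y (γ t) (T k)) :=
        le_min (by linarith) (by rw [h3]; linarith)
      linarith
    · rw [min_eq_right hle]
      have hm : S k - c - 1 ≤ min (gromovProd y (T j) (γ t)) (gromovProd y (γ t) (T k)) :=
        le_min (by linarith) (by rw [h3]; linarith)
      linarith
  -- products between forward and backward orbit
  have prodPP : ∀ p q : ℤ, gromovProd y (T p) (T (-q)) = (Dz p + Dz q - Dz (p + q))/2 := by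
    intro p q
    rw [prodT p (-q), hDz_neg q, show (-q - p : ℤ) = -(p + q) from by ring, hDz_neg]
  have hBWDprod : ∀ j k : ℤ, gromovProd y (T (-j)) (T (-k)) = gromovProd y (T j) (T k) := by
    intro j k
    rw [prodT, prodT, hDz_neg j, hDz_neg k,
      show (-k - -j : ℤ) = -(k - j) from by ring, hDz_neg]
  set PP : ℤ → ℤ → ℝ := fun p q => gromovProd y (T p) (T (-q)) with hPPdef
  have FWDσ : ∀ j k m : ℤ, 1 ≤ m → m ≤ j → m ≤ k →
      σ * m - (c + 1) - 3*κ₀ ≤ gromovProd y (T j) (T k) := by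
    intro j k m hm hmj hmk
    have h1 := FWD j k (le_trans hm hmj) (le_trans hm hmk)
    have h2 : σ * (m:ℝ) ≤ min (S j) (S k) := by
      apply le_min
      · calc σ * (m:ℝ) ≤ σ * (j:ℝ) := by
              apply mul_le_mul_of_nonneg_left _ (le_of_lt hσ)
              exact_mod_cast hmj
          _ ≤ S j := hSlb j (le_trans hm hmj)
      · calc σ * (m:ℝ) ≤ σ * (k:ℝ) := by
              apply mul_le_mul_of_nonneg_left _ (le_of_lt hσ)
              exact_mod_cast hmk
          _ ≤ S k := hSlb k (le_trans hm hmk)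
    linarith
  have rel1 : ∀ p p' q m : ℤ, 1 ≤ m → m ≤ p → m ≤ p' →
      min (PP p q) (σ * m - (c + 1) - 3*κ₀) ≤ PP p' q + 3*κ₀ := by
    intro p p' q m hm hmp hmp'
    have h4 := four_pt hgeo hthin y (T (-q)) (T p) (T p')
    have e1 : gromovProd y (T (-q)) (T p) = PP p q := gp_comm _ _ _
    have e2 : gromovProd y (T (-q)) (T p') = PP p' q := gp_comm _ _ _
    rw [e1, e2] at h4
    have h5 := FWDσ p p' m hm hmp hmp'
    calc min (PP p q) (σ * m - (c + 1) - 3*κ₀)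
        ≤ min (PP p q) (gromovProd y (T p) (T p')) := min_le_min (le_refl _) h5
      _ ≤ PP p' q + 3*κ₀ := h4
  have rel2 : ∀ p q q' m : ℤ, 1 ≤ m → m ≤ q → m ≤ q' →
      min (PP p q) (σ * m - (c + 1) - 3*κ₀) ≤ PP p q' + 3*κ₀ := by
    intro p q q' m hm hmq hmq'
    have h4 := four_pt hgeo hthin y (T p) (T (-q)) (T (-q'))
    have e1 : gromovProd y (T (-q)) (T (-q')) = gromovProd y (T q) (T q') := hBWDprod q q'
    rw [e1] at h4
    have h5 := FWDσ q q' m hm hmq hmq'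
    calc min (PP p q) (σ * m - (c + 1) - 3*κ₀)
        ≤ min (PP p q) (gromovProd y (T q) (T q')) := min_le_min (le_refl _) h5
      _ ≤ PP p q' + 3*κ₀ := h4
  -- infinitely many near-additive scales
  have M4 : ∀ C' : ℝ, 0 ≤ C' → ∀ N₀ : ℤ, 1 ≤ N₀ →
      ∃ qb : ℤ, N₀ ≤ qb ∧ PP qb qb < σ * qb - C' := by
    intro C' hC' N₀ hN₀
    by_contra hcon
    push_neg at hcon
    set N : ℤ := max N₀ ⌈(C' + 1)/σ⌉ with hNdef
    have hNN₀ : N₀ ≤ N := le_max_left _ _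
    have hN1 : 1 ≤ N := le_trans hN₀ hNN₀
    have hN0 : (0:ℤ) ≤ N := by linarith
    have hNσ : C' + 1 ≤ σ * N := by
      have h1 : (C' + 1)/σ ≤ (⌈(C' + 1)/σ⌉ : ℝ) := Int.le_ceil _
      have h2 : ((⌈(C' + 1)/σ⌉ : ℤ) : ℝ) ≤ (N : ℝ) := by
        exact_mod_cast le_max_right N₀ ⌈(C' + 1)/σ⌉
      have h3 : (C' + 1)/σ ≤ (N:ℝ) := le_trans h1 h2
      calc C' + 1 = ((C' + 1)/σ) * σ := by field_simp
        _ ≤ (N:ℝ) * σ := mul_le_mul_of_nonneg_right h3 (le_of_lt hσ)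
        _ = σ * N := by ring
    have hstep : ∀ m : ℤ, N ≤ m → Dz (2*m) ≤ 2*Dz m - 2*(σ*m - C') := by
      intro m hm
      have h1 := hcon m (le_trans hNN₀ hm)
      have h2 : PP m m = (Dz m + Dz m - Dz (m + m))/2 := prodPP m m
      rw [show (m + m : ℤ) = 2*m from by ring] at h2
      rw [h2] at h1
      linarith
    have h2k : ∀ k : ℕ, (1:ℤ) ≤ 2^k := fun k => one_le_pow₀ (by norm_num)
    have hiter : ∀ k : ℕ, Dz (2^k * N) ≤ 2^k * (Dz N - k) := by
      intro k
      induction k with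
      | zero => simp
      | succ k ih =>
          have hm : N ≤ 2^k * N := le_mul_of_one_le_left hN0 (h2k k)
          have hs := hstep (2^k * N) hm
          rw [show (2 * (2^k * N) : ℤ) = 2^(k+1) * N from by ring] at hs
          have hcast : ((2^k * N : ℤ) : ℝ) = 2^k * (N:ℝ) := by push_cast; ring
          rw [hcast] at hs
          have hp : (1:ℝ) ≤ 2^k := one_le_pow₀ (by norm_num)
          have hNr : 1 ≤ (N:ℝ) := by exact_mod_cast hN1
          have goal2 : (2:ℝ)^(k+1) * (Dz N - (k+1:ℕ)) =
              2 * (2^k * (Dz N - k)) - 2^(k+1) := by push_cast; ring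
          rw [goal2]
          have hkey : 2*(σ * (2^k * (N:ℝ)) - C') ≥ (2:ℝ)^(k+1) := by
            have e1 : σ * (2^k * (N:ℝ)) = 2^k * (σ * N) := by ring
            rw [e1]
            have e2 : (2:ℝ)^(k+1) = 2^k * 2 := by ring
            rw [e2]
            nlinarith [hNσ, hp, hC']
          linarith
    obtain ⟨k, hk⟩ : ∃ k : ℕ, Dz N < (k:ℝ) := exists_nat_gt (Dz N)
    have h1 := hiter k
    have h2 := hDz_nonneg (2^k * N)
    have hp : (0:ℝ) < 2^k := by positivity
    nlinarith
  -- quantitative convergence estimates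
  have hNpick : ∀ z : ℝ, ∃ N : ℕ, 1 ≤ N ∧ z ≤ σ * N := by
    intro z
    refine ⟨max 1 ⌈z/σ⌉₊, le_max_left _ _, ?_⟩
    have h1 : z/σ ≤ (⌈z/σ⌉₊ : ℝ) := Nat.le_ceil _
    have h2 : ((⌈z/σ⌉₊ : ℕ) : ℝ) ≤ ((max 1 ⌈z/σ⌉₊ : ℕ) : ℝ) := by
      exact_mod_cast le_max_right 1 ⌈z/σ⌉₊
    calc z = (z/σ) * σ := by field_simp
      _ ≤ ((max 1 ⌈z/σ⌉₊ : ℕ) : ℝ) * σ := mul_le_mul_of_nonneg_right (le_trans h1 h2) hσ.le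
      _ = σ * ((max 1 ⌈z/σ⌉₊ : ℕ) : ℝ) := by ring
  have QY : ∀ M : ℝ, ∃ N : ℕ, ∀ j k : ℤ, (N:ℤ) ≤ j → (N:ℤ) ≤ k →
      M ≤ gromovProd y (T j) (T k) := by
    intro M
    obtain ⟨N, hN1, hNs⟩ := hNpick (M + (c + 1) + 3*κ₀)
    refine ⟨N, fun j k hj hk => ?_⟩
    have h := FWDσ j k (N:ℤ) (by exact_mod_cast hN1) hj hk
    have hcast : ((N:ℤ):ℝ) = (N:ℝ) := by push_cast; ring
    rw [hcast] at h
    linarith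
  have QYmix : ∀ M : ℝ, ∃ N : ℕ, ∀ (j : ℤ) (u : ℝ), (N:ℤ) ≤ j → (N:ℝ) ≤ u →
      M ≤ gromovProd y (T j) (γ u) := by
    intro M
    obtain ⟨N₁, hN11, hN1s⟩ := hNpick (M + (c + 1) + 3*κ₀)
    refine ⟨max N₁ (max 1 ⌈M + 3*κ₀⌉₊), fun j u hj hu => ?_⟩
    have hj1 : (1:ℤ) ≤ j := by
      have : (1:ℕ) ≤ max N₁ (max 1 ⌈M + 3*κ₀⌉₊) := le_trans (le_max_left _ _) (le_max_right _ _)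
      have h2 : ((1:ℕ):ℤ) ≤ (max N₁ (max 1 ⌈M + 3*κ₀⌉₊) : ℕ) := by exact_mod_cast this
      exact le_trans h2 hj
    obtain ⟨t, hE, htu⟩ := ((EST1 j hj1).and (eventually_ge_atTop u)).exists
    have hu0 : (0:ℝ) ≤ u := le_trans (by positivity) hu
    have ht0 : (0:ℝ) ≤ t := le_trans hu0 htu
    have h4 := four_pt hgeo hthin y (T j) (γ t) (γ u)
    rw [ray_gp hray ht0 hu0, min_eq_right htu] at h4
    have hSj : M + 3*κ₀ ≤ S j - c - 1 := by
      have hjN : ((N₁:ℕ):ℝ) ≤ (j:ℝ) := by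
        have : ((N₁:ℕ):ℤ) ≤ j := le_trans (by exact_mod_cast le_max_left N₁ _) hj
        exact_mod_cast this
      have : σ * (N₁:ℝ) ≤ σ * (j:ℝ) := mul_le_mul_of_nonneg_left hjN hσ.le
      have hs := hSlb j hj1
      linarith
    have huM : M + 3*κ₀ ≤ u := by
      have h1 : M + 3*κ₀ ≤ (⌈M + 3*κ₀⌉₊ : ℝ) := Nat.le_ceil _
      have h2 : ((⌈M + 3*κ₀⌉₊ : ℕ) : ℝ) ≤ ((max N₁ (max 1 ⌈M + 3*κ₀⌉₊) : ℕ) : ℝ) := by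
        exact_mod_cast le_trans (le_max_right 1 _) (le_max_right N₁ _)
      linarith
    have hmin : M + 3*κ₀ ≤ min (gromovProd y (T j) (γ t)) u := le_min (by linarith) huM
    linarith
  -- the ray sequence
  have hVRgs : ∀ w : X, IsGromovSeq w (fun n : ℕ => γ n) := by
    intro w
    apply tendsto_pair_of
    intro M
    refine ⟨max 1 ⌈M + dist w y⌉₊, fun p q hp hq => ?_⟩
    have hp' : ((max 1 ⌈M + dist w y⌉₊ : ℕ) : ℝ) ≤ (p:ℝ) := by exact_mod_cast hp
    have hq' : ((max 1 ⌈M + dist w y⌉₊ : ℕ) : ℝ) ≤ (q:ℝ) := by exact_mod_cast hq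
    have hc1 : M + dist w y ≤ (⌈M + dist w y⌉₊ : ℝ) := Nat.le_ceil _
    have hc2 : ((⌈M + dist w y⌉₊ : ℕ) : ℝ) ≤ ((max 1 ⌈M + dist w y⌉₊ : ℕ) : ℝ) := by
      exact_mod_cast le_max_right 1 _
    have heq : gromovProd y (γ p) (γ q) = min (p:ℝ) (q:ℝ) :=
      ray_gp hray (Nat.cast_nonneg p) (Nat.cast_nonneg q)
    have hb := gp_base w y (γ p) (γ q)
    rw [heq] at hb
    have : M + dist w y ≤ min (p:ℝ) (q:ℝ) := le_min (by linarith) (by linarith)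
    linarith
  obtain ⟨hseq, hVRQ⟩ := hray.2.2
  -- forward orbit sequence
  have hUFgs : ∀ w : X, IsGromovSeq w (fun n : ℕ => T n) := by
    intro w
    apply tendsto_pair_of
    intro M
    obtain ⟨N, hN⟩ := QY (M + dist w y)
    refine ⟨N, fun p q hp hq => ?_⟩
    have h := hN p q (by exact_mod_cast hp) (by exact_mod_cast hq)
    have hb := gp_base w y (T p) (T q)
    linarith
  have hUFVR : gromovRel ⟨fun n : ℕ => T n, hUFgs⟩ ⟨fun n : ℕ => γ n, hseq⟩ := by
    intro w
    apply tendsto_pair_of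
    intro M
    obtain ⟨N, hN⟩ := QYmix (M + dist w y)
    refine ⟨N, fun p q hp hq => ?_⟩
    have h := hN p q (by exact_mod_cast hp) (by exact_mod_cast hq)
    have hb := gp_base w y (T p) (γ q)
    linarith
  have hUFa : Quot.mk gromovRel (⟨fun n : ℕ => T n, hUFgs⟩ : GromovSeq X) = a :=
    (Quot.sound hUFVR).trans hVRQ
  -- backward orbit sequence
  have hUBgs : ∀ w : X, IsGromovSeq w (fun n : ℕ => T (-n)) := by
    intro w
    apply tendsto_pair_of
    intro M
    obtain ⟨N, hN⟩ := QY (M + dist w y)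
    refine ⟨N, fun p q hp hq => ?_⟩
    have h := hN p q (by exact_mod_cast hp) (by exact_mod_cast hq)
    have hb := gp_base w y (T (-(p:ℤ))) (T (-(q:ℤ)))
    rw [hBWDprod] at hb
    linarith
  set UB : GromovSeq X := ⟨fun n : ℕ => T (-n), hUBgs⟩ with hUBdef
  set b : GromovBoundary X := Quot.mk gromovRel UB with hbdef
  -- g fixes b
  have hmapUB : ∀ n : ℕ, (UB.map g).1 n = T (1 - n) := by
    intro n
    show g (T (-n)) = T (1 - n)
    have h := hTadd 1 (-n)
    rw [zpow_one] at h
    rw [show (1 + -(n:ℤ) : ℤ) = 1 - n from by ring] at h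
    exact h
  have hgb : boundaryMap g b = b := by
    rw [hbdef, boundaryMap_mk]
    apply Quot.sound
    intro w
    apply tendsto_pair_of
    intro M
    obtain ⟨N, hN⟩ := QY (M + dist w y)
    refine ⟨N + 1, fun p q hp hq => ?_⟩
    rw [hmapUB p]
    show M ≤ gromovProd w (T (1 - p)) (T (-(q:ℤ)))
    rw [show (1 - (p:ℤ) : ℤ) = -((p:ℤ) - 1) from by ring]
    have hb := gp_base w y (T (-((p:ℤ) - 1))) (T (-(q:ℤ)))
    rw [hBWDprod] at hb
    have h := hN ((p:ℤ) - 1) q (by omega) (by omega)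
    linarith
  -- forward convergence for every point
  have comp4 : ∀ x' : X, SeqConvToBoundary (fun n : ℕ => (g ^ n) x') a := by
    intro x'
    have hdV : ∀ n : ℕ, dist ((g ^ n) x') (T n) = dist x' y := by
      intro n
      have e : T (n:ℤ) = (g ^ n) y := by
        show (g ^ (n:ℤ)) y = (g ^ n) y
        rw [zpow_natCast]
      rw [e]
      exact (g ^ n).dist_eq x' y
    have hgs : ∀ w : X, IsGromovSeq w (fun n : ℕ => (g ^ n) x') := by
      intro w
      apply tendsto_pair_of
      intro M
      obtain ⟨N, hN⟩ := QY (M + dist w y + 2 * dist x' y)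
      refine ⟨N, fun p q hp hq => ?_⟩
      have hmv := gp_move w ((g ^ p) x') ((g ^ q) x') (T p) (T q)
      rw [hdV p, hdV q] at hmv
      have hb := gp_base w y (T p) (T q)
      have h := hN p q (by exact_mod_cast hp) (by exact_mod_cast hq)
      linarith
    refine ⟨hgs, ?_⟩
    have hrel : gromovRel ⟨fun n : ℕ => (g ^ n) x', hgs⟩ ⟨fun n : ℕ => γ n, hseq⟩ := by
      intro w
      apply tendsto_pair_of
      intro M
      obtain ⟨N, hN⟩ := QYmix (M + dist w y + dist x' y)
      refine ⟨N, fun p q hp hq => ?_⟩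
      have hmv := gp_move w ((g ^ p) x') (γ q) (T p) (γ q)
      rw [hdV p, dist_self] at hmv
      have hb := gp_base w y (T p) (γ q)
      have h := hN p q (by exact_mod_cast hp) (by exact_mod_cast hq)
      linarith
    exact (Quot.sound hrel).trans hVRQ
  -- backward convergence for every point
  have comp5 : ∀ x' : X, SeqConvToBoundary (fun n : ℕ => (g⁻¹ ^ n) x') b := by
    intro x'
    have hdW : ∀ n : ℕ, dist ((g⁻¹ ^ n) x') (T (-n)) = dist x' y := by
      intro n
      have e : T (-(n:ℤ)) = (g⁻¹ ^ n) y := by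
        show (g ^ (-(n:ℤ))) y = (g⁻¹ ^ n) y
        rw [zpow_neg, zpow_natCast, ← inv_pow]
      rw [e]
      exact (g⁻¹ ^ n).dist_eq x' y
    have hgs : ∀ w : X, IsGromovSeq w (fun n : ℕ => (g⁻¹ ^ n) x') := by
      intro w
      apply tendsto_pair_of
      intro M
      obtain ⟨N, hN⟩ := QY (M + dist w y + 2 * dist x' y)
      refine ⟨N, fun p q hp hq => ?_⟩
      have hmv := gp_move w ((g⁻¹ ^ p) x') ((g⁻¹ ^ q) x') (T (-p)) (T (-q))
      rw [hdW p, hdW q] at hmv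
      have hb := gp_base w y (T (-(p:ℤ))) (T (-(q:ℤ)))
      rw [hBWDprod] at hb
      have h := hN p q (by exact_mod_cast hp) (by exact_mod_cast hq)
      linarith
    refine ⟨hgs, ?_⟩
    have hrel : gromovRel ⟨fun n : ℕ => (g⁻¹ ^ n) x', hgs⟩ UB := by
      intro w
      apply tendsto_pair_of
      intro M
      obtain ⟨N, hN⟩ := QY (M + dist w y + dist x' y)
      refine ⟨N, fun p q hp hq => ?_⟩
      have hmv := gp_move w ((g⁻¹ ^ p) x') (T (-q)) (T (-p)) (T (-q))
      rw [hdW p, dist_self] at hmv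
      have hb := gp_base w y (T (-(p:ℤ))) (T (-(q:ℤ)))
      rw [hBWDprod] at hb
      have h := hN p q (by exact_mod_cast hp) (by exact_mod_cast hq)
      linarith
    rw [hbdef]
    exact Quot.sound hrel
  -- the two fixed points are distinct
  have hne : a ≠ b := by
    intro hab
    have hrel : gromovRel (⟨fun n : ℕ => T n, hUFgs⟩ : GromovSeq X) UB :=
      gromovRel_of_quot_eq hgeo hthin (by rw [hUFa, hab, hbdef])
    have htend := hrel y
    obtain ⟨qb, hqb1, hqb2⟩ :=
      M4 ((c + 1) + 3*κ₀ + (6*κ₀ + 1)) (by nlinarith) 1 (le_refl 1)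
    have hi : ∀ q : ℤ, qb ≤ q → PP qb q ≤ PP qb qb + 3*κ₀ := by
      intro q hq
      have h := rel2 qb q qb qb hqb1 hq (le_refl qb)
      rcases le_total (PP qb q) (σ * qb - (c + 1) - 3*κ₀) with h' | h'
      · rw [min_eq_left h'] at h; linarith
      · rw [min_eq_right h'] at h; linarith
    have hii : ∀ p q : ℤ, qb ≤ p → qb ≤ q → PP p q ≤ PP qb qb + 6*κ₀ := by
      intro p q hp hq
      have h := rel1 p qb q qb hqb1 hp (le_refl qb)
      have hiq := hi q hq
      rcases le_total (PP p q) (σ * qb - (c + 1) - 3*κ₀) with h' | h'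
      · rw [min_eq_left h'] at h; linarith
      · rw [min_eq_right h'] at h; linarith
    obtain ⟨Nt, hNt⟩ := tendsto_pair_elim htend (PP qb qb + 6*κ₀ + 1)
    have hn1 : Nt ≤ max Nt (qb.toNat + 1) := le_max_left _ _
    have hnqb : qb ≤ ((max Nt (qb.toNat + 1) : ℕ) : ℤ) := by
      have h1 : qb.toNat + 1 ≤ max Nt (qb.toNat + 1) := le_max_right _ _
      omega
    have hP := hNt (max Nt (qb.toNat + 1)) (max Nt (qb.toNat + 1)) hn1 hn1
    have hP' : PP qb qb + 6*κ₀ + 1 ≤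
        PP ((max Nt (qb.toNat + 1) : ℕ) : ℤ) ((max Nt (qb.toNat + 1) : ℕ) : ℤ) := hP
    have h2 := hii _ _ hnqb hnqb
    linarith
  exact ⟨a, b, hne, hfix, hgb, comp4, comp5⟩

lemma hyp_inv {X : Type*} [MetricSpace X] {g : Iso X} (h : IsHyperbolicIsom g⁻¹) :
    IsHyperbolicIsom g := by
  obtain ⟨a, b, hne, ha, hb, hf, hbw⟩ := h
  refine ⟨b, a, hne.symm, ?_, ?_, ?_, hf⟩
  · have := bmap_fix_inv hb
    rwa [inv_inv] at this
  · have := bmap_fix_inv ha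
    rwa [inv_inv] at this
  · intro x
    have := hbw x
    rwa [inv_inv] at this

end Key

/-- **Theorem (Statement 17).** Let `X` be a proper hyperbolic geodesic metric space with
thin-triangles constant `κ₀` and let `c > 0` be the universal constant controlling the
Busemann cocycle identity. Then there is `κ > 0` such that every isometry of `X` which
fixes a boundary point `a` and is not hyperbolic moves every Busemann function `β_a(·,y)`
a bounded amount: `|β_a(z,y) − β_a(z,gy)| ≤ κ` for all `y, z`. -/
theorem nonhyperbolic_isometries_almost_preserve_busemann
    {X : Type} [MetricSpace X] [ProperSpace X] (hgeo : GeodesicSpace X)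
    (κ₀ : ℝ) (hκ : 0 < κ₀) (hthin : DeltaThinTriangles X κ₀)
    (c : ℝ) (hc : 0 < c)
    (hcoc : ∀ (a : GromovBoundary X) (x y z : X),
      |busemann a z y - busemann a z x + busemann a y x| ≤ c) :
    ∃ κ : ℝ, 0 < κ ∧ ∀ (g : Iso X) (a : GromovBoundary X),
      boundaryMap g a = a → ¬IsHyperbolicIsom g →
      ∀ y z : X, |busemann a z y - busemann a z (g y)| ≤ κ := by
  refine ⟨4 * c, by linarith, ?_⟩
  intro g a hfix hnot y z
  have hfix' : boundaryMap g⁻¹ a = a := bmap_fix_inv hfix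
  have hky : ∀ (h : Iso X), boundaryMap h a = a → ¬IsHyperbolicIsom h →
      ∀ w : X, busemann a w (h w) ≤ c := by
    intro h hf hnh w
    by_contra hgt
    push_neg at hgt
    exact hnh (key_hyperbolic hgeo hκ hthin hc hcoc h a hf w hgt)
  have h1 : busemann a y (g y) ≤ c := hky g hfix hnot y
  have hnot' : ¬IsHyperbolicIsom g⁻¹ := fun hh => hnot (hyp_inv hh)
  have h2 : busemann a y (g⁻¹ y) ≤ c := hky g⁻¹ hfix' hnot' y
  have h3 : busemann a (g y) y = busemann a y (g⁻¹ y) := by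
    have h := busemann_isom hfix' (g y) y
    rw [iso_inv_apply_apply] at h
    exact h.symm
  have hxx : |busemann a (g y) (g y)| ≤ c := by
    have h := hcoc a (g y) (g y) (g y)
    have e : busemann a (g y) (g y) - busemann a (g y) (g y) + busemann a (g y) (g y)
        = busemann a (g y) (g y) := by ring
    rwa [e] at h
  have hanti := hcoc a (g y) y (g y)
  have hmain := hcoc a (g y) y z
  rw [abs_le] at hmain hanti hxx ⊢
  constructor
  · linarith [hmain.2, hanti.1, hxx.1]
  · linarith [hmain.1, hanti.1, hxx.1]

end PaperHyp
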